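/- arXiv:2106.10054 — 6 statements merged into one kernel-verified Lean document; each statement's English description precedes it below -/
import Mathlib

section
/- Let α be irrational with convergents p_n/q_n. If B ⊂ [0,1) is an interval (arc of the torus) of length β, N is an integer with q_n < N ≤ q_{n+1}, and the sets B, B+α, ..., B+(N-1)α (mod 1) are pairwise disjoint, then β ≤ ‖q_n α‖. -/
open Filter Topology

/-- The denominator `q n` of the `n`-th convergent of the continued fraction of `α`. -/
noncomputable def qd (α : ℝ) (n : ℕ) : ℝ := (GenContFract.of α).dens n

/-- The distance from `x` to the nearest integer. -/
noncomputable def nint (x : ℝ) : ℝ := |x - round x|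

/-- The arc of the torus `ℝ/ℤ` which is the image of `[c, c+β)`. -/
noncomputable def arc (c β : ℝ) : Set (AddCircle (1 : ℝ)) :=
  (fun x : ℝ => (x : AddCircle (1 : ℝ))) '' Set.Ico c (c + β)

private lemma contsAux_b_int (v : ℝ) :
    ∀ n : ℕ, (∃ z : ℤ, ((GenContFract.of v).contsAux n).b = (z : ℝ)) ∧
      (∃ z : ℤ, ((GenContFract.of v).contsAux (n + 1)).b = (z : ℝ)) := by
  intro n
  induction n with
  | zero =>
    constructor
    · exact ⟨0, by simp [GenContFract.zeroth_contAux_eq_one_zero]⟩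
    · exact ⟨1, by simp [GenContFract.contsAux]⟩
  | succ n ih =>
    refine ⟨ih.2, ?_⟩
    rcases h : (GenContFract.of v).s.get? n with _ | gp
    · have : (GenContFract.of v).contsAux (n + 2) = (GenContFract.of v).contsAux (n + 1) :=
        GenContFract.contsAux_stable_step_of_terminated h
      rw [this]; exact ih.2
    · obtain ⟨ha, z, hb⟩ := GenContFract.of_partNum_eq_one_and_exists_int_partDen_eq h
      obtain ⟨z1, h1⟩ := ih.1
      obtain ⟨z2, h2⟩ := ih.2
      have hrec := GenContFract.contsAux_recurrence h rfl rfl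
      refine ⟨z * z2 + z1, ?_⟩
      rw [hrec]
      simp only [GenContFract.nextConts, GenContFract.nextDen, ha, hb, h1, h2]
      push_cast
      ring

private lemma den_int (v : ℝ) (n : ℕ) :
    ∃ z : ℤ, (GenContFract.of v).dens n = (z : ℝ) := by
  rw [GenContFract.den_eq_conts_b, GenContFract.nth_cont_eq_succ_nth_contAux]
  exact (contsAux_b_int v n).2

private lemma one_le_den (v : ℝ) (n : ℕ) : (1 : ℝ) ≤ (GenContFract.of v).dens n := by
  induction n with
  | zero => simp [GenContFract.zeroth_den_eq_one]
  | succ n ih => exact le_trans ih (GenContFract.of_den_mono)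

theorem stmt1 (α : ℝ) (hα : Irrational α) (n N : ℕ) (c β : ℝ) (hβ : 0 < β)
    (hN₁ : qd α n < (N : ℝ)) (hN₂ : (N : ℝ) ≤ qd α (n + 1))
    (hdisj : ∀ j k : ℕ, j < N → k < N → j ≠ k →
      Disjoint ((fun x => x + (((j : ℝ) * α : ℝ) : AddCircle (1 : ℝ))) '' arc c β)
               ((fun x => x + (((k : ℝ) * α : ℝ) : AddCircle (1 : ℝ))) '' arc c β)) :
    β ≤ nint (qd α n * α) := by
  -- the denominator is a positive integer
  obtain ⟨z, hz⟩ := den_int α n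
  have hz1 : (1 : ℝ) ≤ (z : ℝ) := hz ▸ one_le_den α n
  have hz1' : 1 ≤ z := by exact_mod_cast hz1
  set m : ℕ := z.toNat with hm
  have hzm : (z : ℝ) = (m : ℝ) := by
    rw [hm]; exact_mod_cast (Int.toNat_of_nonneg (by omega)).symm
  have hq : qd α n = (m : ℝ) := by rw [qd, hz, hzm]
  have hm1 : 1 ≤ m := by omega
  have hmN : m < N := by
    have : (m : ℝ) < (N : ℝ) := by rw [← hq]; exact hN₁
    exact_mod_cast this
  have h0N : 0 < N := lt_of_le_of_lt (Nat.zero_le m) hmN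
  -- suppose for contradiction
  by_contra hcon
  push_neg at hcon
  rw [hq] at hcon
  set r : ℤ := round ((m : ℝ) * α) with hr
  set d : ℝ := (m : ℝ) * α - r with hd
  have habs : |d| < β := by simpa [nint, hd, hr] using hcon
  have key : ∀ x : ℝ, ((x + r : ℝ) : AddCircle (1 : ℝ)) = ((x : ℝ) : AddCircle (1 : ℝ)) := by
    intro x
    have : ((r : ℝ) : AddCircle (1 : ℝ)) = 0 := by
      rw [AddCircle.coe_eq_zero_iff]
      exact ⟨r, by simp⟩
    rw [AddCircle.coe_add, this, add_zero]
  have hdisj' := hdisj m 0 hmN h0N (by omega)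
  rcases le_or_gt 0 d with hd0 | hd0
  · -- point c + d is in both arcs
    have p1 : ((c + d : ℝ) : AddCircle (1 : ℝ)) ∈
        (fun x => x + (((m : ℝ) * α : ℝ) : AddCircle (1 : ℝ))) '' arc c β := by
      refine ⟨(c : ℝ), ⟨c, ⟨le_refl c, by linarith⟩, rfl⟩, ?_⟩
      show ((c : ℝ) : AddCircle (1 : ℝ)) + _ = _
      rw [← AddCircle.coe_add]
      have : c + (m : ℝ) * α = (c + d) + r := by rw [hd]; ring
      rw [this, key]
    have p2' : ((c + d : ℝ) : AddCircle (1 : ℝ)) ∈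
        (fun x => x + ((((0 : ℕ) : ℝ) * α : ℝ) : AddCircle (1 : ℝ))) '' arc c β := by
      refine ⟨((c + d : ℝ) : AddCircle (1 : ℝ)), ⟨c + d, ⟨by linarith, by
        have : d < β := lt_of_le_of_lt (le_abs_self d) habs
        linarith⟩, rfl⟩, ?_⟩
      simp
    exact Set.disjoint_left.mp hdisj' p1 p2'
  · -- point c is in both arcs
    have p1 : ((c : ℝ) : AddCircle (1 : ℝ)) ∈
        (fun x => x + (((m : ℝ) * α : ℝ) : AddCircle (1 : ℝ))) '' arc c β := by
      refine ⟨((c - d : ℝ) : AddCircle (1 : ℝ)), ⟨c - d, ⟨by linarith, by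
        have : -d < β := lt_of_le_of_lt (neg_le_abs d) habs
        linarith⟩, rfl⟩, ?_⟩
      show _ + _ = _
      rw [← AddCircle.coe_add]
      have : c - d + (m : ℝ) * α = c + r := by rw [hd]; ring
      rw [this, key]
    have p2 : ((c : ℝ) : AddCircle (1 : ℝ)) ∈
        (fun x => x + ((((0 : ℕ) : ℝ) * α : ℝ) : AddCircle (1 : ℝ))) '' arc c β := by
      refine ⟨((c : ℝ) : AddCircle (1 : ℝ)), ⟨c, ⟨le_refl c, by linarith⟩, rfl⟩, ?_⟩
      simp
    exact Set.disjoint_left.mp hdisj' p1 p2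
end

section
/- Let α be irrational and let B = [0, β₁) ∪ [c₂, c₂+β₂) be a disjoint union of two arcs on the torus. If q_n < N ≤ q_{n+1} and the translates B, B+α, ..., B+(N-1)α (mod 1) are pairwise disjoint, then β₁ ≤ ‖q_n α‖ and β₂ ≤ ‖q_n α‖. -/
open Filter Topology

lemma of_not_terminatedAt {α : ℝ} (hα : Irrational α) (n : ℕ) :
    ¬ (GenContFract.of α).TerminatedAt n := by
  intro h
  have hterm : (GenContFract.of α).Terminates := ⟨n, h⟩
  obtain ⟨q, hq⟩ := (GenContFract.terminates_iff_rat α).mp hterm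
  exact hα ⟨q, hq.symm⟩

lemma of_s_some {α : ℝ} (hα : Irrational α) (n : ℕ) :
    ∃ gp, (GenContFract.of α).s.get? n = some gp := by
  have := of_not_terminatedAt hα n
  rw [GenContFract.terminatedAt_iff_s_none] at this
  exact Option.ne_none_iff_exists'.mp this

lemma qd_int {α : ℝ} (hα : Irrational α) (n : ℕ) : ∃ z : ℤ, qd α n = (z : ℝ) := by
  have key : ∀ m : ℕ, (∃ z : ℤ, qd α m = (z : ℝ)) ∧ ∃ z : ℤ, qd α (m + 1) = (z : ℝ) := by
    intro m
    induction m with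
    | zero =>
      constructor
      · exact ⟨1, by simp [qd, GenContFract.zeroth_den_eq_one]⟩
      · obtain ⟨gp, hgp⟩ := of_s_some hα 0
        obtain ⟨-, z, hz⟩ := GenContFract.of_partNum_eq_one_and_exists_int_partDen_eq hgp
        exact ⟨z, by rw [qd, GenContFract.first_den_eq hgp, hz]⟩
    | succ m ih =>
      refine ⟨ih.2, ?_⟩
      obtain ⟨z₀, hz₀⟩ := ih.1
      obtain ⟨z₁, hz₁⟩ := ih.2
      obtain ⟨gp, hgp⟩ := of_s_some hα (m + 1)
      obtain ⟨ha, z, hz⟩ := GenContFract.of_partNum_eq_one_and_exists_int_partDen_eq hgp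
      refine ⟨z * z₁ + z₀, ?_⟩
      have := GenContFract.dens_recurrence (g := GenContFract.of α) hgp rfl rfl
      have hz₀' : (GenContFract.of α).dens m = (z₀ : ℝ) := hz₀
      have hz₁' : (GenContFract.of α).dens (m + 1) = (z₁ : ℝ) := hz₁
      rw [qd, this, ha, hz, hz₀', hz₁']
      push_cast
      ring
  exact (key n).1

lemma one_le_qd {α : ℝ} (hα : Irrational α) (n : ℕ) : 1 ≤ qd α n := by
  have h := GenContFract.succ_nth_fib_le_of_nth_den (K := ℝ) (v := α) (n := n)
    (Or.inr (of_not_terminatedAt hα _))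
  calc (1 : ℝ) = ((1 : ℕ) : ℝ) := by norm_num
  _ ≤ ((Nat.fib (n + 1) : ℕ) : ℝ) := by
      exact_mod_cast Nat.fib_pos.mpr (Nat.succ_pos n)
  _ ≤ qd α n := h

lemma qd_nat {α : ℝ} (hα : Irrational α) (n : ℕ) : ∃ k : ℕ, qd α n = (k : ℝ) ∧ 1 ≤ k := by
  obtain ⟨z, hz⟩ := qd_int hα n
  have h1 : (1 : ℝ) ≤ (z : ℝ) := hz ▸ one_le_qd hα n
  have hz1 : 1 ≤ z := by exact_mod_cast h1
  exact ⟨z.toNat, by rw [hz]; exact_mod_cast (Int.toNat_of_nonneg (by omega)).symm,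
    by omega⟩

lemma not_disjoint_arc (c β t : ℝ) (hβ : 0 < β) (h : |t - round t| < β) :
    ¬ Disjoint ((fun x => x + ((0 : ℝ) : AddCircle (1 : ℝ))) '' arc c β)
      ((fun x => x + ((t : ℝ) : AddCircle (1 : ℝ))) '' arc c β) := by
  obtain ⟨d, hd⟩ : ∃ d : ℝ, d = t - round t := ⟨_, rfl⟩
  rw [← hd] at h
  obtain ⟨x, hx⟩ : ∃ x : ℝ, x = c + max d 0 := ⟨_, rfl⟩
  have hmax : max d 0 ≤ |d| := max_le (le_abs_self d) (abs_nonneg d)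
  have hmax' : max 0 (-d) ≤ |d| := max_le (abs_nonneg d) (neg_le_abs d)
  have hxmem : x ∈ Set.Ico c (c + β) :=
    ⟨by simp [hx, le_max_right], by rw [hx]; linarith [lt_of_le_of_lt hmax h]⟩
  have hyval : x - d = c + max 0 (-d) := by
    rw [hx]
    rcases le_total d 0 with hle | hle
    · rw [max_eq_right hle, max_eq_right (by linarith)]; ring
    · rw [max_eq_left hle, max_eq_left (by linarith)]; ring
  have hymem : x - d ∈ Set.Ico c (c + β) := by
    rw [hyval]
    exact ⟨by simp [le_max_left], by linarith [lt_of_le_of_lt hmax' h]⟩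
  rw [Set.not_disjoint_iff]
  refine ⟨(x : AddCircle (1 : ℝ)), ⟨(x : AddCircle (1 : ℝ)), ⟨x, hxmem, rfl⟩, by
      simp⟩, ⟨((x - d : ℝ) : AddCircle (1 : ℝ)), ⟨x - d, hymem, rfl⟩, ?_⟩⟩
  have hint : (((round t : ℤ) : ℝ) : AddCircle (1 : ℝ)) = 0 :=
    (AddCircle.coe_eq_zero_iff (1 : ℝ)).mpr ⟨round t, by simp⟩
  calc ((x - d : ℝ) : AddCircle (1 : ℝ)) + ((t : ℝ) : AddCircle (1 : ℝ))
      = ((x - d + t : ℝ) : AddCircle (1 : ℝ)) := (AddCircle.coe_add _ _ _).symm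
    _ = ((x + (round t : ℝ) : ℝ) : AddCircle (1 : ℝ)) := by rw [show x - d + t = x + (round t : ℝ) by rw [hd]; ring]
    _ = (x : AddCircle (1 : ℝ)) + (((round t : ℤ) : ℝ) : AddCircle (1 : ℝ)) :=
        AddCircle.coe_add _ _ _
    _ = (x : AddCircle (1 : ℝ)) := by rw [hint, add_zero]

theorem stmt2 (α : ℝ) (hα : Irrational α) (n N : ℕ) (β₁ c₂ β₂ : ℝ)
    (hβ₁ : 0 < β₁) (hβ₂ : 0 < β₂)
    (harcs : Disjoint (arc 0 β₁) (arc c₂ β₂))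
    (hN₁ : qd α n < (N : ℝ)) (hN₂ : (N : ℝ) ≤ qd α (n + 1))
    (hdisj : ∀ j k : ℕ, j < N → k < N → j ≠ k →
      Disjoint ((fun x => x + (((j : ℝ) * α : ℝ) : AddCircle (1 : ℝ))) '' (arc 0 β₁ ∪ arc c₂ β₂))
               ((fun x => x + (((k : ℝ) * α : ℝ) : AddCircle (1 : ℝ))) '' (arc 0 β₁ ∪ arc c₂ β₂))) :
    β₁ ≤ nint (qd α n * α) ∧ β₂ ≤ nint (qd α n * α) := by
  obtain ⟨k, hk, hk1⟩ := qd_nat hα n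
  have hkN : k < N := by exact_mod_cast hk ▸ hN₁
  have h0N : 0 < N := lt_of_le_of_lt (Nat.zero_le k) hkN
  have h0k : (0 : ℕ) ≠ k := by omega
  have hd := hdisj 0 k h0N hkN h0k
  have e0 : (((0 : ℕ) : ℝ) * α : ℝ) = (0 : ℝ) := by norm_num
  rw [e0] at hd
  have hq : qd α n * α = (k : ℝ) * α := by rw [hk]
  rw [hq, nint]
  constructor
  · by_contra hcon
    push_neg at hcon
    refine not_disjoint_arc 0 β₁ ((k : ℝ) * α) hβ₁ hcon ?_
    exact Disjoint.mono (Set.image_mono Set.subset_union_left)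
      (Set.image_mono Set.subset_union_left) hd
  · by_contra hcon
    push_neg at hcon
    refine not_disjoint_arc c₂ β₂ ((k : ℝ) * α) hβ₂ hcon ?_
    exact Disjoint.mono (Set.image_mono Set.subset_union_right)
      (Set.image_mono Set.subset_union_right) hd
end

section
/- For the golden ratio type angle: if α is irrational with all partial quotients eventually equal to 1, then lim_{n→∞} (q_{n+1} + ⌊q_n/2⌋)·‖q_n α‖ = (2√5 + 5)/10. -/
open Filter Topology

namespace CFAux

open GenContFract

noncomputable def rho : ℝ := (Real.sqrt 5 - 1) / 2

lemma rho_sq : rho ^ 2 + rho = 1 := by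
  have h : Real.sqrt 5 ^ 2 = 5 := Real.sq_sqrt (by norm_num)
  unfold rho; nlinarith [Real.sqrt_nonneg 5]

lemma rho_pos : 0 < rho := by
  have h : (2:ℝ) < Real.sqrt 5 := by
    nlinarith [Real.sq_sqrt (show (0:ℝ) ≤ 5 by norm_num), Real.sqrt_nonneg 5]
  unfold rho; linarith

lemma rho_lt_one : rho < 1 := by
  have h : Real.sqrt 5 < 3 := by
    nlinarith [Real.sq_sqrt (show (0:ℝ) ≤ 5 by norm_num), Real.sqrt_nonneg 5]
  unfold rho; linarith

lemma rho_le_two_thirds : rho ≤ 2/3 := by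
  have h : Real.sqrt 5 ≤ 7/3 := by
    nlinarith [Real.sq_sqrt (show (0:ℝ) ≤ 5 by norm_num), Real.sqrt_nonneg 5]
  unfold rho; linarith

variable {α : ℝ}

lemma notTerm (hα : Irrational α) (n : ℕ) : ¬(GenContFract.of α).TerminatedAt n := by
  intro h
  have ht : (GenContFract.of α).Terminates := ⟨n, h⟩
  rcases (terminates_iff_rat α).mp ht with ⟨q, hq⟩
  exact hα ⟨q, hq.symm⟩

lemma streamSome (hα : Irrational α) (n : ℕ) :
    ∃ ifp, IntFractPair.stream α n = some ifp := by
  cases n with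
  | zero => exact ⟨_, IntFractPair.stream_zero α⟩
  | succ m =>
    have h := notTerm hα m
    rw [of_terminatedAt_n_iff_succ_nth_intFractPair_stream_eq_none] at h
    exact Option.ne_none_iff_exists'.mp h

lemma frPos (hα : Irrational α) {n : ℕ} {ifp : IntFractPair ℝ}
    (h : IntFractPair.stream α n = some ifp) : 0 < ifp.fr := by
  rcases (IntFractPair.nth_stream_fr_nonneg h).lt_or_eq with hlt | heq
  · exact hlt
  · exfalso
    have hnone : IntFractPair.stream α (n+1) = none :=
      IntFractPair.succ_nth_stream_eq_none_iff.mpr (Or.inr ⟨ifp, h, heq.symm⟩)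
    rcases streamSome hα (n+1) with ⟨_, h2⟩
    rw [hnone] at h2; cases h2

lemma one_le_dens (hα : Irrational α) (n : ℕ) : (1:ℝ) ≤ (GenContFract.of α).dens n := by
  have h := succ_nth_fib_le_of_nth_den (v := α) (n := n) (Or.inr (notTerm hα _))
  have h1 : (1:ℝ) ≤ (Nat.fib (n+1) : ℝ) := by
    exact_mod_cast Nat.one_le_iff_ne_zero.mpr (Nat.fib_pos.mpr n.succ_pos).ne'
  linarith

lemma dens_pos (hα : Irrational α) (n : ℕ) : (0:ℝ) < (GenContFract.of α).dens n :=
  lt_of_lt_of_le one_pos (one_le_dens hα n)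

/-- the signed error times (-1)^n : positive. -/
noncomputable def xe (α : ℝ) (n : ℕ) : ℝ :=
  (-1)^n * ((GenContFract.of α).dens n * α - (GenContFract.of α).nums n)

lemma xe_pos (hα : Irrational α) (n : ℕ) : 0 < xe α n := by
  obtain ⟨ifp, hst⟩ := streamSome hα n
  have hfr := frPos hα hst
  have h : α - (GenContFract.of α).convs n = if ifp.fr = 0 then 0 else
      (-1) ^ n / (((GenContFract.of α).contsAux (n+1)).b *
        (ifp.fr⁻¹ * ((GenContFract.of α).contsAux (n+1)).b + ((GenContFract.of α).contsAux n).b)) :=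
    sub_convs_eq hst
  rw [if_neg hfr.ne'] at h
  have hBeq : ((GenContFract.of α).contsAux (n+1)).b = (GenContFract.of α).dens n := by
    rw [den_eq_conts_b, nth_cont_eq_succ_nth_contAux]
  have hB : (0:ℝ) < ((GenContFract.of α).contsAux (n+1)).b := by rw [hBeq]; exact dens_pos hα n
  have hpB : (0:ℝ) ≤ ((GenContFract.of α).contsAux n).b := zero_le_of_contsAux_b
  have hfr' : 0 < ifp.fr⁻¹ := inv_pos.mpr hfr
  have hD : 0 < ((GenContFract.of α).contsAux (n+1)).b * (ifp.fr⁻¹ * ((GenContFract.of α).contsAux (n+1)).b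
      + ((GenContFract.of α).contsAux n).b) := by positivity
  have hsign : 0 < (-1:ℝ)^n * (α - (GenContFract.of α).convs n) := by
    have hone : (-1:ℝ)^n * ((-1:ℝ)^n) = 1 := by
      rw [← pow_add, ← two_mul, pow_mul]; norm_num
    rw [h, ← mul_div_assoc, hone]
    positivity
  have hconv : (GenContFract.of α).dens n * α - (GenContFract.of α).nums n = (GenContFract.of α).dens n * (α - (GenContFract.of α).convs n) := by
    have h0 : (GenContFract.of α).dens n ≠ 0 := (dens_pos hα n).ne'
    rw [conv_eq_num_div_den]
    field_simp
  unfold xe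
  rw [hconv]
  have := mul_pos (dens_pos hα n) hsign
  nlinarith [this]

lemma nums_int (hα : Irrational α) (n : ℕ) : ∃ z : ℤ, (GenContFract.of α).nums n = (z:ℝ) := by
  have h0 : ∃ z : ℤ, (GenContFract.of α).nums 0 = (z:ℝ) :=
    ⟨⌊α⌋, by rw [num_eq_conts_a, nth_cont_eq_succ_nth_contAux,
        first_contAux_eq_h_one, of_h_eq_floor]⟩
  have h1 : ∃ z : ℤ, (GenContFract.of α).nums 1 = (z:ℝ) := by
    obtain ⟨gp, hgp⟩ := Option.ne_none_iff_exists'.mp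
      ((not_iff_not.mpr terminatedAt_iff_s_none).mp (notTerm hα 0))
    obtain ⟨ha1, z, hz⟩ := of_partNum_eq_one_and_exists_int_partDen_eq hgp
    refine ⟨z * ⌊α⌋ + 1, ?_⟩
    rw [first_num_eq hgp, of_h_eq_floor, ha1, hz]
    push_cast; ring
  have key : ∀ m : ℕ, (∃ z : ℤ, (GenContFract.of α).nums m = (z:ℝ)) ∧
      (∃ z : ℤ, (GenContFract.of α).nums (m+1) = (z:ℝ)) := by
    intro m
    induction m with
    | zero => exact ⟨h0, h1⟩
    | succ m ih =>
      refine ⟨ih.2, ?_⟩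
      obtain ⟨gp, hgp⟩ := Option.ne_none_iff_exists'.mp
        ((not_iff_not.mpr terminatedAt_iff_s_none).mp (notTerm hα (m+1)))
      obtain ⟨ha1, z, hz⟩ := of_partNum_eq_one_and_exists_int_partDen_eq hgp
      obtain ⟨z1, hz1⟩ := ih.1
      obtain ⟨z2, hz2⟩ := ih.2
      refine ⟨z * z2 + z1, ?_⟩
      rw [nums_recurrence hgp hz1 hz2, ha1, hz]
      push_cast; ring
  exact (key n).1

lemma det_identity (hα : Irrational α) (n : ℕ) :
    (GenContFract.of α).dens (n+1) * xe α n + (GenContFract.of α).dens n * xe α (n+1) = 1 := by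
  have hdet : (GenContFract.of α).nums n * (GenContFract.of α).dens (n+1) - (GenContFract.of α).dens n * (GenContFract.of α).nums (n+1)
      = (-1)^(n+1) := by
    have h := SimpContFract.determinant (s := SimpContFract.of α) (n := n)
      (notTerm hα n)
    exact h
  unfold xe
  have hc : ((-1:ℝ)^n)^2 = 1 := by
    rw [← pow_mul, mul_comm, pow_mul]; norm_num
  rw [pow_succ] at hdet ⊢
  linear_combination (-(-1:ℝ)^n) * hdet + hc

lemma s_one (hα : Irrational α) {N : ℕ}
    (hN : ∀ i ≥ N, (GenContFract.of α).partDens.get? i = some 1) {n : ℕ} (hn : n ≥ N) :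
    ∃ gp : Pair ℝ, (GenContFract.of α).s.get? n = some gp ∧ gp.a = 1 ∧ gp.b = 1 := by
  obtain ⟨gp, hgp, hb⟩ := exists_s_b_of_partDen (hN n hn)
  obtain ⟨ha1, _⟩ := of_partNum_eq_one_and_exists_int_partDen_eq hgp
  exact ⟨gp, hgp, ha1, hb⟩

lemma dens_rec (hα : Irrational α) {N : ℕ}
    (hN : ∀ i ≥ N, (GenContFract.of α).partDens.get? i = some 1) {n : ℕ} (hn : n ≥ N) :
    (GenContFract.of α).dens (n+2) = (GenContFract.of α).dens (n+1) + (GenContFract.of α).dens n := by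
  obtain ⟨gp, hgp, ha1, hb1⟩ := s_one hα hN (show n+1 ≥ N by omega)
  rw [dens_recurrence hgp rfl rfl, ha1, hb1]; ring

lemma nums_rec (hα : Irrational α) {N : ℕ}
    (hN : ∀ i ≥ N, (GenContFract.of α).partDens.get? i = some 1) {n : ℕ} (hn : n ≥ N) :
    (GenContFract.of α).nums (n+2) = (GenContFract.of α).nums (n+1) + (GenContFract.of α).nums n := by
  obtain ⟨gp, hgp, ha1, hb1⟩ := s_one hα hN (show n+1 ≥ N by omega)
  rw [nums_recurrence hgp rfl rfl, ha1, hb1]; ring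

lemma xe_rec (hα : Irrational α) {N : ℕ}
    (hN : ∀ i ≥ N, (GenContFract.of α).partDens.get? i = some 1) {n : ℕ} (hn : n ≥ N) :
    xe α (n+2) = xe α n - xe α (n+1) := by
  unfold xe
  rw [dens_rec hα hN hn, nums_rec hα hN hn]
  rw [pow_succ, pow_succ]
  ring

/-- key: eventual exact ratio. -/
lemma ratio_exact {x : ℕ → ℝ} {M : ℕ} (hpos : ∀ n ≥ M, 0 < x n)
    (hrec : ∀ n ≥ M, x (n+2) = x n - x (n+1)) :
    ∀ n ≥ M, x (n+1) = rho * x n := by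
  have hlt : ∀ n ≥ M, x (n+1) < x n := by
    intro n hn
    have h2 := hpos (n+2) (by omega)
    rw [hrec n hn] at h2; linarith
  set y : ℕ → ℝ := fun n => x (n+1) / x n with hy
  have hy_pos : ∀ n ≥ M, 0 < y n := fun n hn =>
    div_pos (hpos (n+1) (by omega)) (hpos n hn)
  have hy_lt : ∀ n ≥ M, y n < 1 := fun n hn =>
    (div_lt_one (hpos n hn)).mpr (hlt n hn)
  have hstep : ∀ n ≥ M, rho - y (n+1) = (1 + rho) * (y n - rho) / y n := by
    intro n hn
    have hx1 := hpos (n+1) (by omega)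
    have hx0 := hpos n hn
    have hyn := hy_pos n hn
    have hyval : y (n+1) = 1 / y n - 1 := by
      simp only [hy]
      rw [hrec n hn]
      field_simp
    rw [hyval]
    have hrho := rho_sq
    field_simp
    ring_nf
    nlinarith [hrho]
  have hgrow : ∀ n ≥ M, (1 + rho) * |y n - rho| ≤ |y (n+1) - rho| := by
    intro n hn
    have h := hstep n hn
    have hyn := hy_pos n hn
    have hyl := hy_lt n hn
    have : |y (n+1) - rho| = (1 + rho) * |y n - rho| / y n := by
      rw [abs_sub_comm, h, abs_div, abs_of_pos hyn, abs_mul,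
        abs_of_pos (by linarith [rho_pos] : (0:ℝ) < 1 + rho)]
    rw [this]
    rw [le_div_iff₀ hyn]
    have habs : 0 ≤ |y n - rho| := abs_nonneg _
    have hc : (0:ℝ) ≤ (1 + rho) * |y n - rho| := mul_nonneg (by nlinarith [rho_pos]) habs
    nlinarith [mul_le_mul_of_nonneg_left hyl.le hc]
  have hbound : ∀ n ≥ M, |y n - rho| ≤ 1 := by
    intro n hn
    rw [abs_le]
    constructor <;> nlinarith [hy_pos n hn, hy_lt n hn, rho_pos, rho_lt_one]
  intro n hn
  have key : ∀ k : ℕ, (1 + rho)^k * |y n - rho| ≤ |y (n+k) - rho| := by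
    intro k
    induction k with
    | zero => simp
    | succ k ih =>
      calc (1+rho)^(k+1) * |y n - rho| = (1+rho) * ((1+rho)^k * |y n - rho|) := by ring
        _ ≤ (1+rho) * |y (n+k) - rho| := by
            have := mul_le_mul_of_nonneg_left ih (by nlinarith [rho_pos] : (0:ℝ) ≤ 1+rho)
            linarith
        _ ≤ |y (n+k+1) - rho| := hgrow (n+k) (by omega)
  have hyeq : y n = rho := by
    by_contra hne
    have hpos' : 0 < |y n - rho| := abs_pos.mpr (sub_ne_zero.mpr hne)
    have hgr : Tendsto (fun k : ℕ => (1+rho)^k) atTop atTop :=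
      tendsto_pow_atTop_atTop_of_one_lt (by linarith [rho_pos])
    obtain ⟨k, hk⟩ := (hgr.eventually_ge_atTop (2 / |y n - rho|)).exists
    have h1 := key k
    have h2 := hbound (n+k) (by omega)
    have : 2 ≤ (1+rho)^k * |y n - rho| := by
      rw [div_le_iff₀ hpos'] at hk
      linarith
    linarith
  have heq2 := hyeq
  simp only [hy] at heq2
  rw [div_eq_iff (hpos n hn).ne'] at heq2
  linarith [heq2]

lemma final_value :
    (1 - rho * (rho / (1 + rho * rho))) + (rho / (1 + rho * rho)) / 2 + 0
      = (2 * Real.sqrt 5 + 5) / 10 := by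
  have hrho := rho_sq
  have hden : (0:ℝ) < 1 + rho * rho := by nlinarith [rho_pos]
  have hs : Real.sqrt 5 = 2 * rho + 1 := by unfold rho; ring
  rw [hs]
  field_simp
  ring_nf
  nlinarith [hrho]

/-- geometric decay gives tendsto zero. -/
lemma tendsto_zero_of_geom {f : ℕ → ℝ} {M : ℕ} {c : ℝ} (hc0 : 0 ≤ c) (hc1 : c < 1)
    (h : ∀ n ≥ M, |f (n+1)| ≤ c * |f n|) : Tendsto f atTop (𝓝 0) := by
  have key : ∀ k : ℕ, |f (M+k)| ≤ |f M| * c^k := by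
    intro k
    induction k with
    | zero => simp
    | succ k ih =>
      calc |f (M+k+1)| ≤ c * |f (M+k)| := h (M+k) (by omega)
        _ ≤ c * (|f M| * c^k) := by nlinarith [abs_nonneg (f (M+k))]
        _ = |f M| * c^(k+1) := by ring
  have hshift : Tendsto (fun k : ℕ => f (M + k)) atTop (𝓝 0) := by
    apply squeeze_zero_norm (fun k => key k)
    have := tendsto_pow_atTop_nhds_zero_of_lt_one hc0 hc1
    simpa using this.const_mul |f M|
  have : Tendsto (fun k : ℕ => f (k + M)) atTop (𝓝 0) := by
    simpa [Nat.add_comm] using hshift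
  exact (tendsto_add_atTop_iff_nat M).mp this

end CFAux

open CFAux GenContFract

theorem stmt3 (α : ℝ) (hα : Irrational α)
    (ha : ∃ N : ℕ, ∀ i ≥ N, (GenContFract.of α).partDens.get? i = some 1) :
    Tendsto (fun n : ℕ => (qd α (n + 1) + (⌊qd α n / 2⌋ : ℝ)) * nint (qd α n * α)) atTop
      (𝓝 ((2 * Real.sqrt 5 + 5) / 10)) := by
  obtain ⟨N, hN⟩ := ha
  set q : ℕ → ℝ := fun n => (GenContFract.of α).dens n with hqdef
  set x : ℕ → ℝ := fun n => xe α n with hxdef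
  have hq_pos : ∀ n, 0 < q n := fun n => dens_pos hα n
  have hq_one : ∀ n, 1 ≤ q n := fun n => one_le_dens hα n
  have hq_mono : ∀ n, q n ≤ q (n+1) := fun n => of_den_mono
  have hx_pos : ∀ n, 0 < x n := fun n => xe_pos hα n
  have hx_ratio : ∀ n ≥ N, x (n+1) = rho * x n :=
    ratio_exact (fun n _ => hx_pos n) (fun n hn => xe_rec hα hN hn)
  have hid : ∀ n, q (n+1) * x n + q n * x (n+1) = 1 := fun n => det_identity hα n
  -- x tends to zero
  have hx0 : Tendsto x atTop (𝓝 0) := by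
    apply tendsto_zero_of_geom (M := N) (c := 2/3) (by norm_num) (by norm_num)
    intro n hn
    rw [hx_ratio n hn, abs_mul, abs_of_pos rho_pos]
    nlinarith [rho_le_two_thirds, abs_nonneg (x n)]
  -- t tends to rho
  set t : ℕ → ℝ := fun n => q n / q (n+1) with htdef
  have ht_pos : ∀ n, 0 < t n := fun n => div_pos (hq_pos n) (hq_pos (n+1))
  have ht_le : ∀ n, t n ≤ 1 := fun n => (div_le_one (hq_pos (n+1))).mpr (hq_mono n)
  have hq_rec : ∀ n, n ≥ N → q (n+2) = q (n+1) + q n := fun n hn => dens_rec hα hN hn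
  have ht_rec : ∀ n ≥ N, t (n+1) = 1 / (1 + t n) := by
    intro n hn
    show q (n+1) / q (n+1+1) = 1 / (1 + q n / q (n+1))
    have h2 : q (n+1+1) = q (n+1) + q n := hq_rec n hn
    have hA : q (n+1) ≠ 0 := (hq_pos (n+1)).ne'
    rw [h2, one_add_div hA, one_div_div]
  have hrho_eq : rho = 1 / (1 + rho) := by
    have := rho_sq
    have h1 : (0:ℝ) < 1 + rho := by linarith [rho_pos]
    field_simp
    nlinarith
  have ht : Tendsto t atTop (𝓝 rho) := by
    have hdiff : Tendsto (fun n => t n - rho) atTop (𝓝 0) := by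
      apply tendsto_zero_of_geom (M := N) (c := 2/3) (by norm_num) (by norm_num)
      intro n hn
      have h1 : (0:ℝ) < 1 + t n := by linarith [ht_pos n]
      have h2 : (0:ℝ) < 1 + rho := by linarith [rho_pos]
      have h23 : (3:ℝ)/2 ≤ 1 + rho := by
        have hs2 : (2:ℝ) < Real.sqrt 5 := by
          nlinarith [Real.sq_sqrt (show (0:ℝ) ≤ 5 by norm_num), Real.sqrt_nonneg 5]
        unfold rho; linarith
      have hinv : 1 / (1 + t n) * (1 + t n) = 1 := one_div_mul_cancel h1.ne'
      have hexp : (t (n+1) - rho) * ((1 + t n) * (1 + rho)) = rho - t n := by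
        rw [ht_rec n hn]
        calc (1 / (1 + t n) - rho) * ((1 + t n) * (1 + rho))
            = (1 / (1 + t n) * (1 + t n)) * (1 + rho) - (rho^2 + rho) * (1 + t n) := by ring
          _ = 1 * (1 + rho) - 1 * (1 + t n) := by rw [hinv, rho_sq]
          _ = rho - t n := by ring
      have heq : t (n+1) - rho = (rho - t n) / ((1 + t n) * (1 + rho)) := by
        rw [eq_div_iff (by positivity : ((1 + t n) * (1 + rho)) ≠ 0)]
        exact hexp
      rw [heq, abs_div, abs_of_pos (by positivity : (0:ℝ) < (1 + t n) * (1 + rho)),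
        div_le_iff₀ (by positivity : (0:ℝ) < (1 + t n) * (1 + rho)), abs_sub_comm]
      have hD : (3:ℝ)/2 ≤ (1 + t n) * (1 + rho) := by nlinarith [ht_pos n]
      have := mul_le_mul_of_nonneg_left hD
        (by positivity : (0:ℝ) ≤ 2/3 * |t n - rho|)
      nlinarith [abs_nonneg (t n - rho)]
    have := hdiff.add_const rho
    simpa using this
  -- u = q n * x n tends to rho/(1+rho^2)
  have hsum_pos : (0:ℝ) < 1 + rho^2 := by nlinarith [rho_pos]
  have hqx1 : ∀ n ≥ N, q (n+1) * x n = 1 - rho * (q n * x n) := by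
    intro n hn
    have := hid n
    rw [hx_ratio n hn] at this
    linarith
  have hu_eq : ∀ n ≥ N, q n * x n = t n / (1 + rho * t n) := by
    intro n hn
    have h1 := hqx1 n hn
    have ht0 : q n = t n * q (n+1) := (div_mul_cancel₀ (q n) (hq_pos (n+1)).ne').symm
    have hden : 0 < 1 + rho * t n := by nlinarith [rho_pos, ht_pos n]
    have ha : q n * x n = t n * (q (n+1) * x n) := by rw [ht0]; ring
    rw [eq_div_iff hden.ne']
    calc q n * x n * (1 + rho * t n)
        = (t n * (q (n+1) * x n)) + rho * t n * (q n * x n) := by rw [← ha]; ring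
      _ = t n * ((q (n+1) * x n) + rho * (q n * x n)) := by ring
      _ = t n := by rw [h1]; ring
  have hu : Tendsto (fun n => q n * x n) atTop (𝓝 (rho / (1 + rho * rho))) := by
    have hden : (1:ℝ) + rho * rho ≠ 0 := by nlinarith [rho_pos]
    have hlim : Tendsto (fun n => t n / (1 + rho * t n)) atTop (𝓝 (rho / (1 + rho * rho))) :=
      ht.div ((ht.const_mul rho).const_add 1) hden
    apply hlim.congr'
    filter_upwards [eventually_ge_atTop N] with n hn
    exact (hu_eq n hn).symm
  have hA : Tendsto (fun n => q (n+1) * x n) atTop (𝓝 (1 - rho * (rho / (1 + rho * rho)))) := by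
    have hlim : Tendsto (fun n => 1 - rho * (q n * x n)) atTop
        (𝓝 (1 - rho * (rho / (1 + rho * rho)))) := by
      exact ((hu.const_mul rho).const_sub 1)
    apply hlim.congr'
    filter_upwards [eventually_ge_atTop N] with n hn
    exact (hqx1 n hn).symm
  -- correction term tends to zero
  have hD : Tendsto (fun n => ((⌊q n / 2⌋ : ℝ) - q n / 2) * x n) atTop (𝓝 0) := by
    have hb : ∀ n, ‖((⌊q n / 2⌋ : ℝ) - q n / 2) * x n‖ ≤ x n := by
      intro n
      rw [Real.norm_eq_abs, abs_mul, abs_of_pos (hx_pos n)]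
      have h1 : (⌊q n / 2⌋ : ℝ) ≤ q n / 2 := Int.floor_le _
      have h2 : q n / 2 - 1 < (⌊q n / 2⌋ : ℝ) := Int.sub_one_lt_floor _
      have h3 : |(⌊q n / 2⌋ : ℝ) - q n / 2| ≤ 1 := by rw [abs_le]; constructor <;> linarith
      nlinarith [hx_pos n, abs_nonneg ((⌊q n / 2⌋ : ℝ) - q n / 2)]
    exact squeeze_zero_norm hb hx0
  -- the target function eventually equals the sum
  have hnint : ∀ᶠ n in atTop, nint (q n * α) = x n := by
    have hsmall := hx0.eventually (eventually_lt_nhds (show (0:ℝ) < 1/2 by norm_num))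
    filter_upwards [hsmall] with n hn
    obtain ⟨z, hz⟩ := nums_int hα n
    have hxe : q n * α = z + (-1)^n * x n := by
      simp only [hxdef]
      unfold xe
      rw [hz]
      rcases Nat.even_or_odd n with he | ho
      · rw [he.neg_one_pow]; ring
      · rw [ho.neg_one_pow]; ring
    have habs : |(-1:ℝ)^n * x n| < 1/2 := by
      rw [abs_mul, abs_pow, abs_neg, abs_one, one_pow, one_mul,
        abs_of_pos (hx_pos n)]
      exact hn
    have hround : round (q n * α) = z := by
      rw [hxe, round_eq]
      have : (z:ℝ) + (-1)^n * x n + 1/2 = (z:ℝ) + ((-1)^n * x n + 1/2) := by ring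
      rw [this, Int.floor_intCast_add]
      have : ⌊(-1:ℝ)^n * x n + 1/2⌋ = 0 := by
        apply Int.floor_eq_zero_iff.mpr
        constructor
        · rw [abs_lt] at habs; linarith [habs.1]
        · rw [abs_lt] at habs; simp; linarith [habs.2]
      rw [this]; ring
    unfold nint
    rw [hround, hxe]
    have : (z:ℝ) + (-1)^n * x n - z = (-1)^n * x n := by ring
    rw [this]
    rw [abs_mul, abs_pow, abs_neg, abs_one, one_pow, one_mul, abs_of_pos (hx_pos n)]
  -- assemble
  have hsum : Tendsto (fun n => q (n+1) * x n + (q n * x n) / 2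
      + ((⌊q n / 2⌋ : ℝ) - q n / 2) * x n) atTop
      (𝓝 ((1 - rho * (rho / (1 + rho * rho))) + (rho / (1 + rho * rho)) / 2 + 0)) := by
    exact (hA.add (hu.div_const 2)).add hD
  rw [final_value] at hsum
  apply hsum.congr'
  filter_upwards [hnint] with n hn
  show q (n+1) * x n + q n * x n / 2 + ((⌊q n / 2⌋:ℝ) - q n / 2) * x n
      = (qd α (n+1) + (⌊qd α n / 2⌋ : ℝ)) * nint (qd α n * α)
  have hqd : ∀ m, qd α m = q m := fun m => rfl
  rw [hqd, hqd, hn]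
  ring
end

section
/- If α = (s+√(s²+4))/2 for a positive integer s (i.e., α has constant partial quotients equal to s), then lim_{n→∞} q_{n+1}·‖q_n α‖ = α²/(1+α²) — equivalently, the covering number by one interval is F₁(f_α) = α²/(1+α²). -/
open Filter Topology

/-- integer version of the convergent denominators -/
def Nq (s : ℕ) : ℕ → ℤ
  | 0 => 1
  | 1 => s
  | (n+2) => s * Nq s (n+1) + Nq s n

lemma round_eq_of_abs_sub_lt_half {x : ℝ} {m : ℤ} (h : |x - m| < 1/2) : round x = m := by
  rw [round_eq, Int.floor_eq_iff]
  rw [abs_lt] at h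
  constructor
  · linarith [h.1]
  · linarith [h.2]

theorem stmt6 (s : ℕ) (hs : 1 ≤ s) (α : ℝ)
    (hα : α = ((s : ℝ) + Real.sqrt ((s : ℝ) ^ 2 + 4)) / 2) :
    Tendsto (fun n : ℕ => qd α (n + 1) * nint (qd α n * α)) atTop
      (𝓝 (α ^ 2 / (1 + α ^ 2))) := by
  have hs1 : (1:ℝ) ≤ (s:ℝ) := by exact_mod_cast hs
  have h4 : (0:ℝ) ≤ (s:ℝ)^2 + 4 := by positivity
  have hsq : Real.sqrt ((s:ℝ)^2 + 4) ^ 2 = (s:ℝ)^2 + 4 := Real.sq_sqrt h4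
  have hsqnn : 0 ≤ Real.sqrt ((s:ℝ)^2 + 4) := Real.sqrt_nonneg _
  have hq : α^2 = s*α + 1 := by rw [hα]; linear_combination (1/4) * hsq
  have hαgt : (s:ℝ) < α := by
    rw [hα]
    have : (s:ℝ) < Real.sqrt ((s:ℝ)^2+4) := by nlinarith [hsq, hsqnn]
    linarith
  have hα1 : 1 < α := lt_of_le_of_lt hs1 hαgt
  have hαpos : 0 < α := by linarith
  have hαlt : α < s + 1 := by nlinarith [hq, hα1, hαpos]
  have hinvpos : 0 < α⁻¹ := by positivity
  have hinvlt1 : α⁻¹ < 1 := by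
    rw [inv_lt_one_iff₀]; right; exact hα1
  have hii : α * α⁻¹ = 1 := mul_inv_cancel₀ (ne_of_gt hαpos)
  -- floor and fract
  have hfloor : ⌊α⌋ = (s:ℤ) := by
    rw [Int.floor_eq_iff]
    push_cast
    exact ⟨le_of_lt hαgt, hαlt⟩
  have hfract : Int.fract α = α - s := by rw [Int.fract, hfloor]; push_cast; ring
  have hfract_ne : Int.fract α ≠ 0 := by rw [hfract]; intro h; linarith
  have hfract_inv : (Int.fract α)⁻¹ = α := by
    rw [hfract]
    exact inv_eq_of_mul_eq_one_right (by linear_combination hq)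
  -- all partial quotients are s
  have hall : ∀ n, (GenContFract.of α).s.get? n = some ⟨1, (s:ℝ)⟩ := by
    intro n
    induction n with
    | zero =>
        have h := GenContFract.of_s_head hfract_ne
        rw [Stream'.Seq.head] at h
        rw [h, hfract_inv, hfloor]; norm_cast
    | succ n ih => rw [GenContFract.of_s_succ, hfract_inv]; exact ih
  have hq0 : qd α 0 = 1 := GenContFract.zeroth_den_eq_one
  have hq1 : qd α 1 = s := GenContFract.first_den_eq (hall 0)
  have hrec : ∀ n, qd α (n+2) = s * qd α (n+1) + qd α n := by
    intro n
    have h := GenContFract.dens_recurrence (g := GenContFract.of α) (hall (n+1)) rfl rfl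
    simpa [qd] using h
  -- the conjugate root
  set β : ℝ := (s:ℝ) - α with hβ
  have hβq : β^2 = s*β + 1 := by rw [hβ]; linear_combination hq
  have hαβ : α * β = -1 := by rw [hβ]; linear_combination -hq
  have hβinv : β = -α⁻¹ := by
    have : α * β = α * (-α⁻¹) := by rw [hαβ, mul_neg, hii]
    exact mul_left_cancel₀ (ne_of_gt hαpos) this
  have hαmβ : 0 < α - β := by rw [hβinv]; linarith
  have habsβ : |β| = α⁻¹ := by rw [hβinv, abs_neg, abs_of_pos hinvpos]
  -- closed form
  have hclosed : ∀ n, qd α n * (α - β) = α^(n+1) - β^(n+1) ∧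
      qd α (n+1) * (α - β) = α^(n+2) - β^(n+2) := by
    intro n
    induction n with
    | zero =>
        refine ⟨by rw [hq0]; ring, ?_⟩
        rw [hq1, hβ]; ring
    | succ n ih =>
        refine ⟨ih.2, ?_⟩
        rw [hrec n]
        have e1 : α^(n+1+2) = s * α^(n+2) + α^(n+1) := by
          have h : α^(n+1+2) = α^(n+1) * α^2 := by ring
          rw [h, hq]; ring
        have e2 : β^(n+1+2) = s * β^(n+2) + β^(n+1) := by
          have h : β^(n+1+2) = β^(n+1) * β^2 := by ring
          rw [h, hβq]; ring
        rw [e1, e2]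
        linear_combination (s:ℝ) * ih.2 + ih.1
  -- integrality
  have hint : ∀ n, qd α n = (Nq s n : ℝ) ∧ qd α (n+1) = (Nq s (n+1) : ℝ) := by
    intro n
    induction n with
    | zero => exact ⟨by rw [hq0]; simp [Nq], by rw [hq1]; simp [Nq]⟩
    | succ n ih =>
        refine ⟨ih.2, ?_⟩
        rw [hrec n, ih.1, ih.2, show Nq s (n+2) = s * Nq s (n+1) + Nq s n from rfl]
        push_cast; ring
  -- key difference formula
  have hdiff : ∀ n, qd α n * α - qd α (n+1) = -β^(n+1) := by
    intro n
    have h : (qd α n * α - qd α (n+1)) * (α - β) = -β^(n+1) * (α - β) := by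
      linear_combination α * (hclosed n).1 - (hclosed n).2
    exact mul_right_cancel₀ (ne_of_gt hαmβ) h
  -- α² > 2
  have hα2 : 2 < α^2 := by
    have hsa : α ≤ s*α := le_mul_of_one_le_left (le_of_lt hαpos) hs1
    linarith [hq, hα1]
  have hhalf : (α⁻¹)^2 < 1/2 := by
    rw [inv_pow, show (1:ℝ)/2 = 2⁻¹ by norm_num]
    exact inv_strictAnti₀ (by norm_num) hα2
  -- eventual formula
  have hev : ∀ n, 1 ≤ n →
      qd α (n+1) * nint (qd α n * α) = (α - β * (β * α⁻¹)^(n+1)) / (α - β) := by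
    intro n hn
    have hd := hdiff n
    have hbound : |qd α n * α - ((Nq s (n+1) : ℤ) : ℝ)| < 1/2 := by
      rw [← (hint n).2, hd, abs_neg, abs_pow, habsβ]
      calc (α⁻¹)^(n+1) ≤ (α⁻¹)^2 :=
            pow_le_pow_of_le_one (le_of_lt hinvpos) (le_of_lt hinvlt1) (by omega)
        _ < 1/2 := hhalf
    have hroundv : round (qd α n * α) = Nq s (n+1) := round_eq_of_abs_sub_lt_half hbound
    have hnint : nint (qd α n * α) = (α⁻¹)^(n+1) := by
      rw [nint, hroundv, ← (hint n).2, hd, abs_neg, abs_pow, habsβ]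
    rw [hnint, eq_div_iff (ne_of_gt hαmβ)]
    calc qd α (n+1) * (α⁻¹)^(n+1) * (α - β)
        = (qd α (n+1) * (α - β)) * (α⁻¹)^(n+1) := by ring
      _ = (α^(n+2) - β^(n+2)) * (α⁻¹)^(n+1) := by rw [(hclosed n).2]
      _ = α * (α * α⁻¹)^(n+1) - β * (β * α⁻¹)^(n+1) := by
          rw [mul_pow, mul_pow]; ring
      _ = α - β * (β * α⁻¹)^(n+1) := by rw [hii, one_pow, mul_one]
  -- the limit
  have hc : |β * α⁻¹| < 1 := by
    rw [abs_mul, habsβ, abs_of_pos hinvpos]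
    nlinarith [hinvpos, hinvlt1]
  have h0 : Tendsto (fun n : ℕ => (β * α⁻¹)^(n+1)) atTop (𝓝 0) :=
    (tendsto_pow_atTop_nhds_zero_of_abs_lt_one hc).comp (tendsto_add_atTop_nat 1)
  have hlim : Tendsto (fun n : ℕ => (α - β * (β * α⁻¹)^(n+1)) / (α - β)) atTop
      (𝓝 ((α - β * 0) / (α - β))) :=
    (tendsto_const_nhds.sub (h0.const_mul β)).div_const _
  have hval : (α - β * 0) / (α - β) = α^2 / (1 + α^2) := by
    rw [mul_zero, sub_zero, div_eq_div_iff (ne_of_gt hαmβ) (by positivity)]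
    linear_combination α * hαβ
  rw [hval] at hlim
  exact hlim.congr' (((eventually_ge_atTop 1).mono fun n hn => (hev n hn).symm))
end

section
/- If α has all partial quotients eventually equal to 2, then q_n/q_{n+1} → √2 − 1 and ‖q_{n+1}α‖/‖q_n α‖ → √2 − 1 as n → ∞. -/
open Filter Topology
open GenContFract

theorem aux_contract {x y : ℝ} (hx : 0 ≤ x) (hy : 0 ≤ y) :
    |1/(2+x) - 1/(2+y)| ≤ |x - y|/4 := by
  have h1 : (0:ℝ) < 2 + x := by linarith
  have h2 : (0:ℝ) < 2 + y := by linarith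
  have key : 1/(2+x) - 1/(2+y) = (y - x)/((2+x)*(2+y)) := by field_simp; ring
  rw [key, abs_div, abs_of_pos (mul_pos h1 h2), abs_sub_comm]
  have h4 : (4:ℝ) ≤ (2+x)*(2+y) := by nlinarith
  exact div_le_div_of_nonneg_left (abs_nonneg _) (by norm_num) h4


theorem aux_round_eq {x : ℝ} {z : ℤ} (h : |x - z| < 1/2) : round x = z := by
  rw [round_eq, Int.floor_eq_iff]
  rw [abs_lt] at h
  constructor
  · linarith
  · push_cast; linarith

theorem aux_tendsto_quarter (u : ℕ → ℝ) (L : ℝ) (N : ℕ)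
    (hbd : ∀ n, |u n - L| ≤ 1)
    (hc : ∀ n, N ≤ n → |u (n+1) - L| ≤ |u n - L|/4) :
    Tendsto u atTop (𝓝 L) := by
  have key : ∀ k n, N ≤ n → |u (n + k) - L| ≤ (1/4:ℝ)^k := by
    intro k
    induction k with
    | zero => intro n _; simpa using hbd n
    | succ k ih =>
      intro n hn
      have h1 := hc (n + k) (le_trans hn (Nat.le_add_right _ _))
      have h2 := ih n hn
      calc |u (n + (k+1)) - L| = |u ((n + k) + 1) - L| := by ring_nf
        _ ≤ |u (n + k) - L|/4 := h1
        _ ≤ (1/4:ℝ)^k/4 := by linarith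
        _ = (1/4:ℝ)^(k+1) := by ring
  rw [Metric.tendsto_atTop]
  intro ε hε
  obtain ⟨k, hk⟩ := exists_pow_lt_of_lt_one hε (by norm_num : (1/4:ℝ) < 1)
  refine ⟨N + k, fun n hn => ?_⟩
  rw [Real.dist_eq]
  have hne : n = N + (n - N) := by omega
  calc |u n - L| = |u (N + (n - N)) - L| := by rw [← hne]
    _ ≤ (1/4:ℝ)^(n - N) := key _ N le_rfl
    _ ≤ (1/4:ℝ)^k := pow_le_pow_of_le_one (by norm_num) (by norm_num) (by omega)
    _ < ε := hk

theorem aux_eq_quarter (u : ℕ → ℝ) (L : ℝ) (N : ℕ)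
    (hbd : ∀ n, |u n - L| ≤ 1)
    (hc : ∀ n, N ≤ n → |u n - L| ≤ |u (n+1) - L|/4) :
    ∀ n, N ≤ n → u n = L := by
  have key : ∀ k n, N ≤ n → |u n - L| ≤ (1/4:ℝ)^k := by
    intro k
    induction k with
    | zero => intro n _; simpa using hbd n
    | succ k ih =>
      intro n hn
      have h1 := hc n hn
      have h2 := ih (n+1) (le_trans hn (Nat.le_succ n))
      calc |u n - L| ≤ |u (n+1) - L|/4 := h1
        _ ≤ (1/4:ℝ)^k/4 := by linarith
        _ = (1/4:ℝ)^(k+1) := by ring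
  intro n hn
  have h0 : |u n - L| ≤ 0 := by
    by_contra h
    push_neg at h
    obtain ⟨k, hk⟩ := exists_pow_lt_of_lt_one h (by norm_num : (1/4:ℝ) < 1)
    exact absurd (key k n hn) (not_le.mpr hk)
  have := abs_nonneg (u n - L)
  have h1 : u n - L = 0 := abs_eq_zero.mp (le_antisymm h0 this)
  linarith


theorem stmt12 (α : ℝ) (hα : Irrational α)
    (ha : ∃ N : ℕ, ∀ i ≥ N, (GenContFract.of α).partDens.get? i = some 2) :
    Tendsto (fun n : ℕ => qd α n / qd α (n + 1)) atTop (𝓝 (Real.sqrt 2 - 1)) ∧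
    Tendsto (fun n : ℕ => nint (qd α (n + 1) * α) / nint (qd α n * α)) atTop
      (𝓝 (Real.sqrt 2 - 1)) := by
  obtain ⟨N, hN⟩ := ha
  set g := GenContFract.of α with hg
  -- non-termination
  have hter : ¬g.Terminates := by
    rw [hg, terminates_iff_rat]
    rintro ⟨q, rfl⟩
    exact hα ⟨q, rfl⟩
  have hnt : ∀ n, ¬g.TerminatedAt n := fun n h => hter ⟨n, h⟩
  -- the stream is always some, with nonzero fractional part
  have hst : ∀ n, ∃ ifp, IntFractPair.stream α n = some ifp ∧ ifp.fr ≠ 0 := by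
    intro n
    have h1 : IntFractPair.stream α (n+1) ≠ none := fun h =>
      hnt n (of_terminatedAt_n_iff_succ_nth_intFractPair_stream_eq_none.mpr h)
    cases hsn : IntFractPair.stream α n with
    | none => exact absurd (IntFractPair.stream_isSeq α hsn) h1
    | some ifp =>
      exact ⟨ifp, rfl, fun hfr => h1 (IntFractPair.stream_eq_none_of_fr_eq_zero hsn hfr)⟩
  -- denominators
  have hq1 : ∀ n, (1:ℝ) ≤ g.dens n := by
    intro n
    induction n with
    | zero => rw [hg]; rw [zeroth_den_eq_one]
    | succ n ih => exact le_trans ih (by rw [hg]; exact of_den_mono)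
  have hq0 : ∀ n, (0:ℝ) < g.dens n := fun n => lt_of_lt_of_le one_pos (hq1 n)
  -- the partial denominator data
  have hgp : ∀ i, N ≤ i → g.s.get? i = some ⟨1, 2⟩ := by
    intro i hi
    obtain ⟨gp, hgpe, hgpb⟩ := g.exists_s_b_of_partDen (hN i hi)
    have hgpa : gp.a = 1 := of_partNum_eq_one (partNum_eq_s_a hgpe)
    rw [hgpe]
    congr 1
    cases gp; simp_all
  -- denominator recurrence
  have hrec : ∀ n, N ≤ n → g.dens (n+2) = 2 * g.dens (n+1) + g.dens n := by
    intro n hn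
    have := dens_recurrence (g := g) (hgp (n+1) (le_trans hn (Nat.le_succ n))) rfl rfl
    simpa using this
  -- sqrt 2 facts
  set s2 := Real.sqrt 2 with hs2def
  have hs2 : s2^2 = 2 := Real.sq_sqrt (by norm_num)
  have hs2nn : 0 ≤ s2 := Real.sqrt_nonneg 2
  have hs1 : 1 < s2 := by nlinarith
  have hs2lt : s2 < 2 := by nlinarith
  set L : ℝ := s2 - 1 with hLdef
  have hL0 : 0 < L := by simp [hLdef]; linarith
  have hL1 : L < 1 := by simp [hLdef]; linarith
  have hLfix : L = 1/(2 + L) := by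
    rw [eq_div_iff (by linarith : (2:ℝ) + L ≠ 0)]
    nlinarith
  -- fractional parts function
  set u : ℕ → ℝ := fun n => ((IntFractPair.stream α n).map IntFractPair.fr).getD 0 with hudef
  have hu_eq : ∀ n p, IntFractPair.stream α n = some p → u n = p.fr := by
    intro n p hp; simp [hudef, hp]
  have hu01 : ∀ n, 0 ≤ u n ∧ u n < 1 := by
    intro n
    obtain ⟨p, hp, -⟩ := hst n
    rw [hu_eq n p hp]
    exact IntFractPair.nth_stream_fr_nonneg_lt_one hp
  -- recurrence on fractional parts
  have hurec : ∀ n, N ≤ n → u n = 1/(2 + u (n+1)) := by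
    intro n hn
    obtain ⟨p, hp, hpfr⟩ := hst n
    have hq := IntFractPair.stream_succ_of_some hp hpfr
    -- identify b of stream (n+1) with partial denominator
    obtain ⟨ifp, hifp, hifpb⟩ :=
      IntFractPair.exists_succ_get?_stream_of_gcf_of_get?_eq_some (hgp n hn)
    rw [hq] at hifp
    have hb : ((IntFractPair.of p.fr⁻¹).b : ℝ) = 2 := by
      rw [Option.some.injEq] at hifp
      rw [hifp]; exact hifpb
    have hfl : (⌊p.fr⁻¹⌋ : ℝ) = 2 := hb
    have hfr2 : (IntFractPair.of p.fr⁻¹).fr = Int.fract p.fr⁻¹ := rfl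
    have hinv : p.fr⁻¹ = 2 + u (n+1) := by
      rw [hu_eq (n+1) _ hq, hfr2, Int.fract, hfl]
      ring
    rw [hu_eq n p hp, ← hinv, one_div, inv_inv]
  -- u is constantly L from N on
  have huL : ∀ n, N ≤ n → u n = L := by
    apply aux_eq_quarter u L N
    · intro n
      obtain ⟨h0, h1⟩ := hu01 n
      rw [abs_le]; constructor <;> simp [hLdef] <;> nlinarith
    · intro n hn
      obtain ⟨h0, _⟩ := hu01 (n+1)
      calc |u n - L| = |1/(2 + u (n+1)) - 1/(2 + L)| := by rw [← hurec n hn, ← hLfix]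
        _ ≤ |u (n+1) - L|/4 := aux_contract (hu01 (n+1)).1 (le_of_lt hL0)
  -- Part 1: ratios of denominators
  set r : ℕ → ℝ := fun n => g.dens n / g.dens (n+1) with hrdef
  have hr_pos : ∀ n, 0 < r n := fun n => div_pos (hq0 n) (hq0 (n+1))
  have hr_le : ∀ n, r n ≤ 1 := by
    intro n
    rw [hrdef]
    exact div_le_one_of_le₀ (by rw [hg]; exact of_den_mono) (hq0 (n+1)).le
  have hrrec : ∀ n, N ≤ n → r (n+1) = 1/(2 + r n) := by
    intro n hn
    have h2 := hrec n hn
    have h1 := (hq0 (n+1)).ne'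
    have h0 := (hq0 n).ne'
    rw [hrdef]
    simp only []
    rw [h2]
    have hpos : (0:ℝ) < 2 + g.dens n / g.dens (n+1) := by
      have := div_nonneg (hq0 n).le (hq0 (n+1)).le
      linarith
    field_simp
  have hrbd : ∀ n, |r n - L| ≤ 1 := by
    intro n
    rw [abs_le]
    constructor
    · nlinarith [hr_pos n, hL1]
    · nlinarith [hr_le n, hL0]
  have hrL : Tendsto r atTop (𝓝 L) := by
    apply aux_tendsto_quarter r L N hrbd
    intro n hn
    calc |r (n+1) - L| = |1/(2 + r n) - 1/(2 + L)| := by rw [← hrrec n hn, ← hLfix]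
      _ ≤ |r n - L|/4 := aux_contract (hr_pos n).le (le_of_lt hL0)
  -- integrality of numerators
  have hint : ∀ n, ∃ z : ℤ, g.nums n = (z:ℝ) := by
    have H : ∀ n, (∃ z : ℤ, g.nums n = (z:ℝ)) ∧ (∃ z : ℤ, g.nums (n+1) = (z:ℝ)) := by
      intro n
      induction n with
      | zero =>
        constructor
        · exact ⟨⌊α⌋, by rw [zeroth_num_eq_h, hg, of_h_eq_floor]⟩
        · obtain ⟨gp, hgpe⟩ : ∃ gp, g.s.get? 0 = some gp :=
            Option.ne_none_iff_exists'.mp (hnt 0)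
          have hgpa : gp.a = 1 := of_partNum_eq_one (partNum_eq_s_a hgpe)
          obtain ⟨ifp, hifp, hifpb⟩ :=
            IntFractPair.exists_succ_get?_stream_of_gcf_of_get?_eq_some hgpe
          refine ⟨ifp.b * ⌊α⌋ + 1, ?_⟩
          rw [first_num_eq hgpe, hgpa, ← hifpb, hg, of_h_eq_floor]
          push_cast
          ring
      | succ n ih =>
        refine ⟨ih.2, ?_⟩
        obtain ⟨gp, hgpe⟩ : ∃ gp, g.s.get? (n+1) = some gp :=
          Option.ne_none_iff_exists'.mp (hnt (n+1))
        have hgpa : gp.a = 1 := of_partNum_eq_one (partNum_eq_s_a hgpe)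
        obtain ⟨ifp, hifp, hifpb⟩ :=
          IntFractPair.exists_succ_get?_stream_of_gcf_of_get?_eq_some hgpe
        obtain ⟨z0, hz0⟩ := ih.1
        obtain ⟨z1, hz1⟩ := ih.2
        refine ⟨ifp.b * z1 + z0, ?_⟩
        rw [nums_recurrence hgpe hz0 hz1, hgpa, ← hifpb]
        push_cast
        ring
    exact fun n => (H n).1
  -- the nint formula
  have hEn : ∀ n, N ≤ n →
      nint (g.dens (n+1) * α) = 1/((s2+1) * g.dens (n+1) + g.dens n) := by
    intro n hn
    obtain ⟨p, hp, hpfr⟩ := hst (n+1)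
    have hpL : p.fr = L := by
      rw [← hu_eq _ _ hp]
      exact huL (n+1) (le_trans hn (Nat.le_succ n))
    have hsub := sub_convs_eq (v := α) hp
    simp only [if_neg hpfr] at hsub
    have hB : (((GenContFract.of α).contsAux (n+2)).b : ℝ) = g.dens (n+1) := by
      rw [hg, den_eq_conts_b, nth_cont_eq_succ_nth_contAux]
    have hpB : (((GenContFract.of α).contsAux (n+1)).b : ℝ) = g.dens n := by
      rw [hg, den_eq_conts_b, nth_cont_eq_succ_nth_contAux]
    rw [hB, hpB, hpL] at hsub
    have hLinv : L⁻¹ = s2 + 1 := by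
      have h : L * (s2 + 1) = 1 := by nlinarith
      exact inv_eq_of_mul_eq_one_right h
    rw [hLinv] at hsub
    set D : ℝ := (s2+1) * g.dens (n+1) + g.dens n with hDdef
    have hD2 : 2 < D := by
      have := hq1 n; have := hq1 (n+1)
      nlinarith
    have hD0 : (0:ℝ) < D := by linarith
    obtain ⟨z, hz⟩ := hint (n+1)
    have hconv : g.convs (n+1) = (z:ℝ) / g.dens (n+1) := by
      rw [conv_eq_num_div_den, hz]
    have hqz : g.dens (n+1) * α - z = g.dens (n+1) * (α - g.convs (n+1)) := by
      have hd := (hq0 (n+1)).ne'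
      rw [hconv]
      field_simp
    have habs : |g.dens (n+1) * α - z| = 1/D := by
      rw [hqz]
      rw [hg] at hsub ⊢
      rw [hsub]
      have hd1 : ((GenContFract.of α).dens (n+1) : ℝ) ≠ 0 := (hq0 (n+1)).ne'
      have hrw : (GenContFract.of α).dens (n+1) *
          ((-1:ℝ)^(n+1) / ((GenContFract.of α).dens (n+1) * D)) = (-1)^(n+1) / D := by
        field_simp
      rw [hrw, abs_div, abs_pow, abs_neg, abs_one, one_pow, abs_of_pos hD0]
    have hround : round (g.dens (n+1) * α) = z := by
      apply aux_round_eq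
      rw [habs, div_lt_div_iff₀ hD0 (by norm_num : (0:ℝ) < 2)]
      linarith
    rw [nint, hround, habs]
  constructor
  · exact hrL
  · have hEv : (fun n : ℕ => ((s2+1) * r n + r (n-1) * r n)/((s2+1) + r n)) =ᶠ[atTop]
        (fun n : ℕ => nint (qd α (n + 1) * α) / nint (qd α n * α)) := by
      filter_upwards [eventually_ge_atTop (N+1)] with n hn
      obtain ⟨m, rfl⟩ : ∃ m, n = m + 1 := ⟨n-1, by omega⟩
      have hm : N ≤ m := by omega
      have h1 := hEn m hm
      have h2 := hEn (m+1) (le_trans hm (Nat.le_succ m))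
      have hqd1 : qd α (m+1+1) = g.dens (m+2) := rfl
      have hqd2 : qd α (m+1) = g.dens (m+1) := rfl
      rw [hqd1, hqd2, h1, h2]
      simp only [Nat.add_sub_cancel, hrdef]
      have e1 : g.dens (m+1) ≠ 0 := (hq0 (m+1)).ne'
      have e2 : g.dens (m+2) ≠ 0 := (hq0 (m+2)).ne'
      have e3 : (0:ℝ) < (s2+1) * g.dens (m+1) + g.dens m := by
        have := hq1 m; have := hq1 (m+1); nlinarith
      have e4 : (0:ℝ) < (s2+1) * g.dens (m+2) + g.dens (m+1) := by
        have := hq1 (m+1); have := hq1 (m+2); nlinarith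
      have e5 : (0:ℝ) < (s2+1) + g.dens (m+1) / g.dens (m+2) := by
        have := div_nonneg (hq0 (m+1)).le (hq0 (m+2)).le
        linarith
      have hsw : ∀ a b : ℝ, a ≠ 0 → b ≠ 0 → (1/a)/(1/b) = b/a := by
        intro a b ha hb; field_simp
      rw [hsw _ _ e4.ne' e3.ne']
      rw [div_eq_div_iff (ne_of_gt e5) (ne_of_gt e4)]
      field_simp
    have h1 : Tendsto (fun n : ℕ => r (n-1)) atTop (𝓝 L) :=
      hrL.comp (tendsto_sub_atTop_nat 1)
    have hlim : Tendsto (fun n : ℕ => ((s2+1) * r n + r (n-1) * r n)/((s2+1) + r n)) atTop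
        (𝓝 (((s2+1)*L + L*L)/((s2+1)+L))) :=
      ((hrL.const_mul (s2+1)).add (h1.mul hrL)).div (tendsto_const_nhds.add hrL)
        (ne_of_gt (by linarith : (0:ℝ) < (s2+1)+L))
    have hval : ((s2+1)*L + L*L)/((s2+1)+L) = L := by
      rw [div_eq_iff (ne_of_gt (by linarith : (0:ℝ) < (s2+1)+L))]
      nlinarith
    rw [hval] at hlim
    exact Filter.Tendsto.congr' hEv hlim
end

section
/- Let α be irrational with convergents q_n. For any interval B = [c, c+β) on the torus with 0 < β ≤ ‖q_n α‖ and any N ≤ q_{n+1}, the translates B, B+α, ..., B+(N−1)α (mod 1) are pairwise disjoint. -/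
open Filter Topology

section Aux

open GenContFract

variable {α : ℝ}

lemma my_not_term (hα : Irrational α) (n : ℕ) : ¬(GenContFract.of α).TerminatedAt n := by
  intro h
  obtain ⟨q, hq⟩ := (terminates_iff_rat α).mp ⟨n, h⟩
  exact hα ⟨q, hq.symm⟩

lemma my_den_pos (hα : Irrational α) (n : ℕ) : 0 < (GenContFract.of α).dens n := by
  have h := succ_nth_fib_le_of_nth_den (v := α) (n := n) (Or.inr (my_not_term hα _))
  have h2 : (0:ℝ) < (Nat.fib (n+1) : ℝ) := by exact_mod_cast Nat.fib_pos.mpr n.succ_pos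
  linarith

lemma my_get (hα : Irrational α) (m : ℕ) :
    ∃ (gp : GenContFract.Pair ℝ) (z : ℤ), (GenContFract.of α).s.get? m = some gp ∧
      gp.a = 1 ∧ gp.b = (z : ℝ) := by
  obtain ⟨gp, hgp⟩ := Option.ne_none_iff_exists'.mp (my_not_term hα m)
  obtain ⟨ha, z, hz⟩ := of_partNum_eq_one_and_exists_int_partDen_eq hgp
  exact ⟨gp, z, hgp, ha, hz⟩

lemma my_int (hα : Irrational α) :
    ∀ n : ℕ, (∃ a : ℤ, (GenContFract.of α).nums n = a) ∧
      ∃ b : ℤ, (GenContFract.of α).dens n = b := by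
  suffices h : ∀ n : ℕ,
      ((∃ a : ℤ, (GenContFract.of α).nums n = a) ∧
        ∃ b : ℤ, (GenContFract.of α).dens n = b) ∧
      ((∃ a : ℤ, (GenContFract.of α).nums (n+1) = a) ∧
        ∃ b : ℤ, (GenContFract.of α).dens (n+1) = b) from fun n => (h n).1
  intro n
  induction n with
  | zero =>
    obtain ⟨gp, z, hs, ha, hb⟩ := my_get hα 0
    refine ⟨⟨⟨⌊α⌋, ?_⟩, ⟨1, ?_⟩⟩, ⟨⟨z * ⌊α⌋ + 1, ?_⟩, ⟨z, ?_⟩⟩⟩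
    · rw [zeroth_num_eq_h, of_h_eq_floor]
    · rw [zeroth_den_eq_one]; norm_num
    · rw [first_num_eq hs, ha, hb, of_h_eq_floor]; push_cast; ring
    · rw [first_den_eq hs, hb]
  | succ n ih =>
    obtain ⟨a0, ha0⟩ := ih.1.1
    obtain ⟨b0, hb0⟩ := ih.1.2
    obtain ⟨a1, ha1⟩ := ih.2.1
    obtain ⟨b1, hb1⟩ := ih.2.2
    obtain ⟨gp, z, hs, ha, hb⟩ := my_get hα (n+1)
    refine ⟨ih.2, ⟨z * a1 + a0, ?_⟩, ⟨z * b1 + b0, ?_⟩⟩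
    · rw [nums_recurrence hs ha0 ha1, ha, hb]; push_cast; ring
    · rw [dens_recurrence hs hb0 hb1, ha, hb]; push_cast; ring

lemma my_sign (hα : Irrational α) (n : ℕ) :
    0 < (-1:ℝ)^n * (α - (GenContFract.of α).convs n) := by
  have hnt := my_not_term hα n
  have h1 : IntFractPair.stream α (n+1) ≠ none := fun h =>
    hnt (of_terminatedAt_n_iff_succ_nth_intFractPair_stream_eq_none.mpr h)
  obtain ⟨ifps, hifps⟩ := Option.ne_none_iff_exists'.mp h1
  obtain ⟨ifp, hst, hfr, -⟩ := IntFractPair.succ_nth_stream_eq_some_iff.mp hifps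
  have h := sub_convs_eq (v := α) hst
  simp only [hfr, if_false] at h
  have hBd : ((GenContFract.of α).contsAux (n+1)).b = (GenContFract.of α).dens n := by
    rw [den_eq_conts_b, nth_cont_eq_succ_nth_contAux]
  have hB : 0 < ((GenContFract.of α).contsAux (n+1)).b := by
    rw [hBd]; exact my_den_pos hα n
  have hpB : 0 ≤ ((GenContFract.of α).contsAux n).b := zero_le_of_contsAux_b
  have hfr' : 0 < ifp.fr := (IntFractPair.nth_stream_fr_nonneg hst).lt_of_ne (Ne.symm hfr)
  rw [h, ← mul_div_assoc, ← pow_add, Even.neg_one_pow ⟨n, rfl⟩]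
  positivity

lemma my_sign' (hα : Irrational α) (n : ℕ) :
    0 < (-1:ℝ)^n * ((GenContFract.of α).dens n * α - (GenContFract.of α).nums n) := by
  have h1 := my_sign hα n
  have h2 := my_den_pos hα n
  have h3 : (GenContFract.of α).dens n * α - (GenContFract.of α).nums n
      = (GenContFract.of α).dens n * (α - (GenContFract.of α).convs n) := by
    rw [conv_eq_num_div_den]; field_simp
  rw [h3]
  nlinarith [mul_pos h2 h1]

lemma my_best (hα : Irrational α) (n : ℕ) (m p : ℤ) (hm : 0 < m)
    (hm' : (m : ℝ) < (GenContFract.of α).dens (n+1)) :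
    |(GenContFract.of α).dens n * α - (GenContFract.of α).nums n| ≤ |(m : ℝ) * α - p| := by
  obtain ⟨⟨a, ha⟩, ⟨b, hb⟩⟩ := my_int hα n
  obtain ⟨⟨a', ha'⟩, ⟨b', hb'⟩⟩ := my_int hα (n+1)
  have hbZ : 0 < b := by
    have := my_den_pos hα n; rw [hb] at this; exact_mod_cast this
  have hb'Z : 0 < b' := by
    have := my_den_pos hα (n+1); rw [hb'] at this; exact_mod_cast this
  have hmb' : m < b' := by rw [hb'] at hm'; exact_mod_cast hm'
  have hdetR : (GenContFract.of α).nums n * (GenContFract.of α).dens (n + 1) -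
      (GenContFract.of α).dens n * (GenContFract.of α).nums (n + 1) = (-1) ^ (n + 1) :=
    (SimpContFract.of α).determinant (my_not_term hα n)
  rw [ha, hb, ha', hb'] at hdetR
  have hdet : a * b' - b * a' = (-1)^(n+1) := by exact_mod_cast hdetR
  set ε : ℤ := (-1)^(n+1) with hε
  have hε2 : ε * ε = 1 := by rw [hε, ← pow_add]; exact Even.neg_one_pow ⟨n+1, rfl⟩
  obtain ⟨x, hx⟩ : ∃ x : ℤ, x = ε * (p * b' - m * a') := ⟨_, rfl⟩
  obtain ⟨y, hy⟩ : ∃ y : ℤ, y = ε * (m * a - p * b) := ⟨_, rfl⟩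
  have hxb : x * b + y * b' = m := by
    rw [hx, hy]; linear_combination (ε * m) * hdet + m * hε2
  have hxa : x * a + y * a' = p := by
    rw [hx, hy]; linear_combination (ε * p) * hdet + p * hε2
  have hr := my_sign' hα n
  have hr' := my_sign' hα (n+1)
  rw [ha, hb] at hr
  rw [ha', hb'] at hr'
  set r : ℝ := (b:ℝ) * α - a with hrdef
  set r' : ℝ := (b':ℝ) * α - a' with hr'def
  have hmp : (m:ℝ) * α - p = (x:ℝ) * r + (y:ℝ) * r' := by
    have c1 : (x:ℝ) * b + y * b' = m := by exact_mod_cast hxb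
    have c2 : (x:ℝ) * a + y * a' = p := by exact_mod_cast hxa
    rw [hrdef, hr'def]; linear_combination c2 - α * c1
  have hrr' : r * r' < 0 := by
    have h1 := mul_pos hr hr'
    have hp : ((-1:ℝ)^n) * ((-1:ℝ)^n) = 1 := by
      rw [← pow_add]; exact Even.neg_one_pow ⟨n, rfl⟩
    have h2 : ((-1:ℝ)^n * r) * ((-1)^(n+1) * r') = -(r * r') := by
      rw [pow_succ]; linear_combination (-(r * r')) * hp
    nlinarith
  have habs : ∀ u w : ℝ, 0 ≤ u * w → |u| ≤ |u + w| := by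
    intro u w h
    rcases lt_trichotomy u 0 with h1 | h1 | h1
    · have hw : w ≤ 0 := by nlinarith
      rw [abs_of_neg h1, abs_of_nonpos (by linarith)]; linarith
    · simpa [h1] using abs_nonneg w
    · have hw : 0 ≤ w := by nlinarith
      rw [abs_of_pos h1, abs_of_nonneg (by linarith)]; linarith
  rw [ha, hb, ← hrdef, hmp]
  rcases eq_or_ne y 0 with hy0 | hy0
  · have hx0 : x ≠ 0 := by
      rintro rfl; rw [hy0] at hxb; simp at hxb; omega
    have h1 : (1:ℝ) ≤ |(x:ℝ)| := by exact_mod_cast Int.one_le_abs hx0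
    rw [hy0]
    calc |r| = 1 * |r| := by ring
    _ ≤ |(x:ℝ)| * |r| := mul_le_mul_of_nonneg_right h1 (abs_nonneg r)
    _ = |(x:ℝ) * r| := (abs_mul _ _).symm
    _ = |(x:ℝ) * r + (0:ℤ) * r'| := by norm_num
  · rcases eq_or_ne x 0 with hx0 | hx0
    · exfalso
      rw [hx0] at hxb; simp at hxb
      have hy1 : 1 ≤ y := by nlinarith [hb'Z, hm]
      nlinarith [mul_nonneg (by omega : (0:ℤ) ≤ y - 1) hb'Z.le]
    · have hxy : x * y < 0 := by
        rcases hx0.lt_or_gt with h1 | h1 <;> rcases hy0.lt_or_gt with h2 | h2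
        · exfalso
          nlinarith [mul_nonneg (by omega : (0:ℤ) ≤ -x) hbZ.le,
            mul_nonneg (by omega : (0:ℤ) ≤ -y - 1) hb'Z.le]
        · exact mul_neg_of_neg_of_pos h1 h2
        · exact mul_neg_of_pos_of_neg h1 h2
        · exfalso
          nlinarith [mul_nonneg (by omega : (0:ℤ) ≤ x - 1) hbZ.le,
            mul_nonneg (by omega : (0:ℤ) ≤ y - 1) hb'Z.le]
      have hsame : 0 ≤ ((x:ℝ) * r) * ((y:ℝ) * r') := by
        have h2 : ((x:ℝ) * r) * ((y:ℝ) * r') = ((x * y : ℤ) : ℝ) * (r * r') := by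
          push_cast; ring
        rw [h2]
        exact (mul_pos_of_neg_of_neg (by exact_mod_cast hxy) hrr').le
      have h1 : (1:ℝ) ≤ |(x:ℝ)| := by exact_mod_cast Int.one_le_abs hx0
      calc |r| = 1 * |r| := by ring
      _ ≤ |(x:ℝ)| * |r| := mul_le_mul_of_nonneg_right h1 (abs_nonneg r)
      _ = |(x:ℝ) * r| := (abs_mul _ _).symm
      _ ≤ |(x:ℝ) * r + (y:ℝ) * r'| := habs _ _ hsame

lemma my_key (hα : Irrational α) (n : ℕ) (m : ℤ) (hm : 0 < m)
    (hm' : (m : ℝ) < (GenContFract.of α).dens (n+1)) :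
    nint ((GenContFract.of α).dens n * α) ≤ nint ((m:ℝ) * α) := by
  obtain ⟨⟨a, ha⟩, -⟩ := my_int hα n
  calc nint ((GenContFract.of α).dens n * α)
      ≤ |(GenContFract.of α).dens n * α - a| := round_le _ a
  _ = |(GenContFract.of α).dens n * α - (GenContFract.of α).nums n| := by rw [ha]
  _ ≤ |(m:ℝ) * α - round ((m:ℝ) * α)| := my_best hα n m (round ((m:ℝ)*α)) hm hm'
  _ = nint ((m:ℝ) * α) := rfl

end Aux

theorem stmt15 (α : ℝ) (hα : Irrational α) (n N : ℕ) (c β : ℝ)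
    (hβ : 0 < β) (hβ' : β ≤ nint (qd α n * α)) (hN : (N : ℝ) ≤ qd α (n + 1)) :
    ∀ j k : ℕ, j < N → k < N → j ≠ k →
      Disjoint ((fun x => x + (((j : ℝ) * α : ℝ) : AddCircle (1 : ℝ))) '' arc c β)
               ((fun x => x + (((k : ℝ) * α : ℝ) : AddCircle (1 : ℝ))) '' arc c β) := by
  have key : ∀ j k : ℕ, k < j → j < N →
      Disjoint ((fun x => x + (((j : ℝ) * α : ℝ) : AddCircle (1 : ℝ))) '' arc c β)
               ((fun x => x + (((k : ℝ) * α : ℝ) : AddCircle (1 : ℝ))) '' arc c β) := by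
    intro j k hkj hjN
    rw [Set.disjoint_left]
    rintro w hw1 hw2
    simp only [arc, Set.image_image, Set.mem_image, Set.mem_Ico] at hw1 hw2
    obtain ⟨s, hs, rfl⟩ := hw1
    obtain ⟨t, ht, hw⟩ := hw2
    rw [← AddCircle.coe_add, ← AddCircle.coe_add, QuotientAddGroup.eq_iff_sub_mem] at hw
    obtain ⟨z, hz⟩ := AddSubgroup.mem_zmultiples_iff.mp hw
    rw [zsmul_eq_mul, mul_one] at hz
    set m : ℕ := j - k with hm
    have hm1 : 1 ≤ m := by omega
    have hmN : m < N := by omega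
    have hmjk : (j:ℝ) * α - (k:ℝ) * α = (m:ℝ) * α := by
      have : (m:ℝ) = (j:ℝ) - (k:ℝ) := by
        rw [hm, Nat.cast_sub hkj.le]
      rw [this]; ring
    have h4 : (m:ℝ) * α - ((-z : ℤ) : ℝ) = t - s := by
      push_cast
      linarith [hz, hmjk]
    have h5 : |t - s| < β := by
      rw [abs_lt]
      constructor <;> [linarith [hs.1, ht.2]; linarith [ht.1, hs.2]]
    have h6 : nint ((m:ℝ) * α) < β := by
      calc nint ((m:ℝ) * α) ≤ |(m:ℝ) * α - ((-z : ℤ) : ℝ)| := round_le _ _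
      _ = |t - s| := by rw [h4]
      _ < β := h5
    have h7 : β ≤ nint ((m:ℝ) * α) := by
      refine hβ'.trans ?_
      have hmlt : ((m : ℤ) : ℝ) < (GenContFract.of α).dens (n+1) := by
        have h8 : ((m:ℕ):ℝ) < (N:ℝ) := by exact_mod_cast hmN
        calc ((m : ℤ) : ℝ) = ((m:ℕ):ℝ) := by push_cast; ring
        _ < (N:ℝ) := h8
        _ ≤ qd α (n+1) := hN
      have := my_key hα n (m : ℤ) (by exact_mod_cast hm1) hmlt
      simpa [qd] using this
    linarith
  intro j k hj hk hne
  rcases hne.lt_or_gt with h | h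
  · exact (key k j h hk).symm
  · exact key j k h hj
end
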